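/- Fix constants $\alpha, \beta$ with $\beta > 0$, two types $\theta^i > \theta^j$, and quantities $Q^i, Q^j > 0$ with $Q^i + Q^j < \beta$. Define $\hat{v}(x,y) = \frac{\alpha - x\theta^i - y\theta^j}{\beta - x - y}$, and the two paths $\hat{v}_i^N(Q) = \hat{v}(Q,0)$ for $Q \in [0,Q^i]$, $\hat{v}_i^N(Q) = \hat{v}(Q^i, Q - Q^i)$ for $Q \in [Q^i, Q^i+Q^j]$; and $\hat{v}_j^N(Q) = \hat{v}(0,Q)$ for $Q \in [0,Q^j]$, $\hat{v}_j^N(Q) = \hat{v}(Q - Q^j, Q^j)$ for $Q \in [Q^j, Q^i+Q^j]$. Then $\hat{v}_j^N(Q) \geq \hat{v}_i^N(Q)$ for all $Q \in [0, Q^i + Q^j]$. -/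
import Mathlib


/-- Skepticism posterior mean as a function of the ex-ante disclosed masses of two types. -/
noncomputable def vhat (α β θi θj : ℝ) (x y : ℝ) : ℝ := (α - x * θi - y * θj) / (β - x - y)

/-- Path conquering type `i` first. -/
noncomputable def vPathI (α β θi θj Qi : ℝ) (Q : ℝ) : ℝ :=
  if Q ≤ Qi then vhat α β θi θj Q 0 else vhat α β θi θj Qi (Q - Qi)

/-- Path conquering type `j` first. -/
noncomputable def vPathJ (α β θi θj Qj : ℝ) (Q : ℝ) : ℝ :=
  if Q ≤ Qj then vhat α β θi θj 0 Q else vhat α β θi θj (Q - Qj) Qj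

/-- Order-exchange lemma: conquering the higher type first yields pointwise weakly lower
skepticism posterior mean. -/
theorem stmt_7 (α β θi θj Qi Qj : ℝ) (hβ : 0 < β) (hθ : θi > θj)
    (hQi : 0 < Qi) (hQj : 0 < Qj) (hQ : Qi + Qj < β) :
    ∀ Q ∈ Set.Icc (0:ℝ) (Qi + Qj), vPathI α β θi θj Qi Q ≤ vPathJ α β θi θj Qj Q := by
  rintro Q ⟨h0, h1⟩
  have hd : (0:ℝ) < β - Q := by linarith
  unfold vPathI vPathJ vhat
  split_ifs with h2 h3 h3 <;>
    rw [div_le_div_iff₀ (by linarith) (by linarith)] <;> nlinarith [mul_nonneg h0 (sub_nonneg.2 hθ.le), mul_nonneg hQi.le (sub_nonneg.2 hθ.le), mul_nonneg hQj.le (sub_nonneg.2 hθ.le), mul_nonneg (sub_nonneg.2 h1) (sub_nonneg.2 hθ.le), mul_pos hd hd]
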